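/- Finite-n sandwich bound for the uniform-prior posterior: Let n ≥ 1, ν ∈ R_n, and Q ⊆ P(X) with Q ∩ R_n ≠ ∅. Then max_{q∈Q∩R_n} L(q‖ν) − max_{q∈R_n} L(q‖ν) − (m/n)·log(n+1) ≤ (1/n)·log π_n(Q|ν) ≤ max_{q∈Q∩R_n} L(q‖ν) − max_{q∈R_n} L(q‖ν) + (m/n)·log(n+1), where the inequalities hold in ℝ ∪ {−∞} (both sides are −∞ exactly when every q ∈ Q∩R_n vanishes at some point of the support of ν). -/
import Mathlib


open scoped BigOperators Classical
open Filter Topology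

noncomputable section

def pmfSet (X : Type*) [Fintype X] : Set (X → ℝ) :=
  {p | (∀ x, 0 ≤ p x) ∧ ∑ x, p x = 1}

def Rn (X : Type*) [Fintype X] (n : ℕ) : Set (X → ℝ) :=
  {q | q ∈ pmfSet X ∧ ∀ x, ∃ k : ℕ, q x = (k : ℝ) / (n : ℝ)}

def ratPMF (X : Type*) [Fintype X] : Set (X → ℝ) :=
  {q | q ∈ pmfSet X ∧ ∀ x, ∃ r : ℚ, q x = (r : ℝ)}

def Ldiv {X : Type*} [Fintype X] (q p : X → ℝ) : EReal :=
  ∑ x, if p x = 0 then (0 : EReal)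
    else if q x = 0 then (⊥ : EReal)
    else (↑(p x * Real.log (q x)) : EReal)

def LSup {X : Type*} [Fintype X] (Q : Set (X → ℝ)) (p : X → ℝ) : EReal :=
  ⨆ q ∈ Q, Ldiv q p

def Idiv {X : Type*} [Fintype X] (p q : X → ℝ) : EReal :=
  ∑ x, if p x = 0 then (0 : EReal)
    else if q x = 0 then (⊤ : EReal)
    else (↑(p x * Real.log (p x / q x)) : EReal)

def typeProb {X : Type*} [Fintype X] (n : ℕ) (ν q : X → ℝ) : ℝ :=
  ∏ x, q x ^ ((n : ℝ) * ν x)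

def post {X : Type*} [Fintype X] (n : ℕ) (ν : X → ℝ) (Q : Set (X → ℝ)) : ℝ :=
  (∑' q : ↥(Q ∩ Rn X n), typeProb n ν ↑q) / (∑' q : ↥(Rn X n), typeProb n ν ↑q)

def postGen {X : Type*} [Fintype X] (w : (X → ℝ) → ℝ) (n : ℕ) (ν : X → ℝ)
    (Q : Set (X → ℝ)) : ℝ :=
  (∑' q : ↥(Q ∩ Rn X n), w ↑q * typeProb n ν ↑q) /
  (∑' q : ↥(Rn X n), w ↑q * typeProb n ν ↑q)

def tv {X : Type*} [Fintype X] (p q : X → ℝ) : ℝ := (1 / 2) * ∑ x, |p x - q x|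

def tvBall {X : Type*} [Fintype X] (q : X → ℝ) (ε : ℝ) : Set (X → ℝ) :=
  {p | p ∈ pmfSet X ∧ tv p q ≤ ε}

def elog (x : ℝ) : EReal := if x ≤ 0 then (⊥ : EReal) else (↑(Real.log x) : EReal)

def linFam {X : Type*} [Fintype X] {k : ℕ} (u : Fin k → X → ℝ) (a : Fin k → ℝ) :
    Set (X → ℝ) :=
  {q | q ∈ pmfSet X ∧ ∀ j, ∑ x, q x * u j x = a j}

def lambdaN {X : Type*} [Fintype X] (w : (X → ℝ) → ℝ) (n : ℕ) (ν : X → ℝ)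
    (C : Set (X → ℝ)) : EReal :=
  ⨆ q ∈ C ∩ {q | q ∈ Rn X n ∧ 0 < w q},
    (Ldiv q ν + (↑((1 : ℝ) / n * Real.log (w q)) : EReal))

def priorN {X : Type*} [Fintype X] (c : ℕ → (X → ℝ) → (X → ℝ)) (pr : (X → ℝ) → ℝ)
    (n : ℕ) (qn : X → ℝ) : ℝ :=
  ∑' q : ↥{q | q ∈ ratPMF X ∧ c n q = qn}, pr ↑q

section Helpers
variable {X : Type*} [Fintype X]

lemma pmf_le_one {q : X → ℝ} (hq : q ∈ pmfSet X) (x : X) : q x ≤ 1 := by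
  rcases hq with ⟨h0, h1⟩
  calc q x ≤ ∑ y, q y := Finset.single_le_sum (fun y _ => h0 y) (Finset.mem_univ x)
  _ = 1 := h1

lemma Rn_subset_range (n : ℕ) (hn : 1 ≤ n) :
    Rn X n ⊆ Set.range (fun (f : X → Fin (n+1)) (x : X) => ((f x : ℕ) : ℝ) / n) := by
  rintro q ⟨hq, hk⟩
  choose k hkk using hk
  have hn' : (0:ℝ) < n := by exact_mod_cast hn
  have hkn : ∀ x, k x < n + 1 := by
    intro x
    by_contra h
    push_neg at h
    have h2 : ((n:ℝ)+1) / n ≤ q x := by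
      rw [hkk x]; gcongr; exact_mod_cast h
    have h1 : q x ≤ 1 := pmf_le_one hq x
    have h3 : ((n:ℝ)+1) / n ≤ 1 := le_trans h2 h1
    rw [div_le_one hn'] at h3
    linarith
  refine ⟨fun x => ⟨k x, hkn x⟩, ?_⟩
  funext x
  simp [hkk x]

lemma Rn_finite (n : ℕ) (hn : 1 ≤ n) : (Rn X n).Finite :=
  (Set.finite_range _).subset (Rn_subset_range n hn)

lemma Rn_card_le (n : ℕ) (hn : 1 ≤ n) :
    (Rn_finite (X := X) n hn).toFinset.card ≤ (n+1) ^ (Fintype.card X) := by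
  classical
  have hsub : (Rn_finite (X := X) n hn).toFinset ⊆
      Finset.univ.image (fun (f : X → Fin (n+1)) (x : X) => ((f x : ℕ) : ℝ) / n) := by
    intro q hq
    rw [Set.Finite.mem_toFinset] at hq
    rcases Rn_subset_range n hn hq with ⟨f, hf⟩
    exact Finset.mem_image.mpr ⟨f, Finset.mem_univ f, hf⟩
  calc _ ≤ _ := Finset.card_le_card hsub
  _ ≤ (Finset.univ : Finset (X → Fin (n+1))).card := Finset.card_image_le
  _ = (n+1) ^ (Fintype.card X) := by simp [Fintype.card_fun]

lemma ereal_coe_finset_sum {ι : Type*} (s : Finset ι) (f : ι → ℝ) :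
    ((∑ i ∈ s, f i : ℝ) : EReal) = ∑ i ∈ s, (f i : EReal) := by
  induction s using Finset.cons_induction with
  | empty => simp
  | cons a s ha ih => rw [Finset.sum_cons, Finset.sum_cons, EReal.coe_add, ih]

lemma Ldiv_eq_coe {ν q : X → ℝ} (hν0 : ∀ x, 0 ≤ ν x)
    (h : ¬ ∃ x, 0 < ν x ∧ q x = 0) :
    Ldiv q ν = ((∑ x, ν x * Real.log (q x) : ℝ) : EReal) := by
  push_neg at h
  unfold Ldiv
  rw [ereal_coe_finset_sum]
  apply Finset.sum_congr rfl
  intro x _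
  by_cases hx : ν x = 0
  · simp [hx]
  · have hνx : 0 < ν x := lt_of_le_of_ne (hν0 x) (Ne.symm hx)
    have hqx : q x ≠ 0 := h x hνx
    simp [hx, hqx]

lemma Ldiv_eq_bot {ν q : X → ℝ} (h : ∃ x, 0 < ν x ∧ q x = 0) :
    Ldiv q ν = ⊥ := by
  obtain ⟨x, hνx, hqx⟩ := h
  unfold Ldiv
  rw [← Finset.add_sum_erase _ _ (Finset.mem_univ x)]
  rw [if_neg hνx.ne', if_pos hqx]
  exact EReal.bot_add _

lemma typeProb_eq_exp (n : ℕ) {ν q : X → ℝ} (hν0 : ∀ x, 0 ≤ ν x)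
    (hq0 : ∀ x, 0 ≤ q x) (h : ¬ ∃ x, 0 < ν x ∧ q x = 0) :
    typeProb n ν q = Real.exp ((n:ℝ) * ∑ x, ν x * Real.log (q x)) := by
  push_neg at h
  unfold typeProb
  rw [Finset.mul_sum, Real.exp_sum]
  apply Finset.prod_congr rfl
  intro x _
  by_cases hx : ν x = 0
  · simp [hx]
  · have hνx : 0 < ν x := lt_of_le_of_ne (hν0 x) (Ne.symm hx)
    have hqx : 0 < q x := lt_of_le_of_ne (hq0 x) (Ne.symm (h x hνx))
    rw [Real.rpow_def_of_pos hqx]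
    congr 1
    ring

lemma typeProb_eq_zero (n : ℕ) (hn : 1 ≤ n) {ν q : X → ℝ}
    (h : ∃ x, 0 < ν x ∧ q x = 0) : typeProb n ν q = 0 := by
  obtain ⟨x, hνx, hqx⟩ := h
  have hn' : (0:ℝ) < n := by exact_mod_cast hn
  apply Finset.prod_eq_zero (Finset.mem_univ x)
  rw [hqx]
  exact Real.zero_rpow (mul_pos hn' hνx).ne'

lemma typeProb_nonneg (n : ℕ) (ν : X → ℝ) {q : X → ℝ} (hq0 : ∀ x, 0 ≤ q x) :
    0 ≤ typeProb n ν q :=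
  Finset.prod_nonneg (fun x _ => Real.rpow_nonneg (hq0 x) _)

lemma tsum_typeProb (n : ℕ) (ν : X → ℝ) {S : Set (X → ℝ)} (hS : S.Finite) :
    ∑' q : ↥S, typeProb n ν ↑q = ∑ q ∈ hS.toFinset, typeProb n ν q := by
  haveI := hS.fintype
  rw [tsum_fintype, ← Finset.sum_coe_sort hS.toFinset (typeProb n ν)]
  apply Finset.sum_nbij' (fun q => ⟨q.1, (hS.mem_toFinset).mpr q.2⟩)
    (fun q => ⟨q.1, (hS.mem_toFinset).mp q.2⟩) <;> simp

end Helpers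

/-- Finite-n sandwich bound for the uniform-prior posterior. -/
theorem finite_n_sandwich_uniform_prior {X : Type*} [Fintype X] [Nonempty X]
    (n : ℕ) (hn : 1 ≤ n) (ν : X → ℝ) (hν : ν ∈ Rn X n)
    (Q : Set (X → ℝ)) (hQsub : Q ⊆ pmfSet X) (hQRn : (Q ∩ Rn X n).Nonempty) :
    (LSup (Q ∩ Rn X n) ν - LSup (Rn X n) ν
        - (↑((Fintype.card X : ℝ) / n * Real.log (n + 1)) : EReal)
      ≤ (↑((1 : ℝ) / n) : EReal) * elog (post n ν Q)) ∧
    ((↑((1 : ℝ) / n) : EReal) * elog (post n ν Q)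
      ≤ LSup (Q ∩ Rn X n) ν - LSup (Rn X n) ν
        + (↑((Fintype.card X : ℝ) / n * Real.log (n + 1)) : EReal)) ∧
    ((↑((1 : ℝ) / n) : EReal) * elog (post n ν Q) = ⊥ ↔
      ∀ q ∈ Q ∩ Rn X n, ∃ x, 0 < ν x ∧ q x = 0) := by
  
  classical
  have hνnn : ∀ x, 0 ≤ ν x := hν.1.1
  have hn' : (0:ℝ) < n := by exact_mod_cast hn
  have hfin : (Rn X n).Finite := Rn_finite n hn
  have hfinQ : (Q ∩ Rn X n).Finite := hfin.subset Set.inter_subset_right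
  set m := Fintype.card X with hm
  set K : ℝ := ((n:ℝ)+1) ^ m with hK
  have hK1 : (1:ℝ) ≤ K := by
    have h1 : ((1:ℝ)) ≤ (n:ℝ)+1 := by linarith
    calc (1:ℝ) = 1 ^ m := (one_pow m).symm
    _ ≤ ((n:ℝ)+1) ^ m := pow_le_pow_left₀ zero_le_one h1 m
  have hK0 : (0:ℝ) < K := lt_of_lt_of_le one_pos hK1
  have hlogK : Real.log K = (m:ℝ) * Real.log ((n:ℝ)+1) := by rw [hK]; exact Real.log_pow _ m
  have hcard : ((hfin.toFinset.card : ℝ)) ≤ K := by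
    have h := Rn_card_le (X := X) n hn
    calc ((hfin.toFinset.card : ℝ)) ≤ (((n+1)^m : ℕ) : ℝ) := by exact_mod_cast h
    _ = K := by push_cast; ring
  have hDsum : (∑' q : ↥(Rn X n), typeProb n ν ↑q) = ∑ q ∈ hfin.toFinset, typeProb n ν q :=
    tsum_typeProb n ν hfin
  have hNsum : (∑' q : ↥(Q ∩ Rn X n), typeProb n ν ↑q)
      = ∑ q ∈ hfinQ.toFinset, typeProb n ν q := tsum_typeProb n ν hfinQ
  set D := ∑ q ∈ hfin.toFinset, typeProb n ν q with hDdef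
  set N := ∑ q ∈ hfinQ.toFinset, typeProb n ν q with hNdef
  have hpost : post n ν Q = N / D := by unfold post; rw [hDsum, hNsum]
  have hνmem : ν ∈ hfin.toFinset := hfin.mem_toFinset.mpr hν
  have hnonneg : ∀ q ∈ Rn X n, ∀ x, 0 ≤ q x := fun q hq => hq.1.1
  obtain ⟨qD, hqDmem, hqDmax⟩ :=
    Finset.exists_max_image hfin.toFinset (fun q => Ldiv q ν) ⟨ν, hνmem⟩
  have hqDRn : qD ∈ Rn X n := hfin.mem_toFinset.mp hqDmem
  have hνgood : ¬ ∃ x, 0 < ν x ∧ ν x = 0 := by rintro ⟨x, h1, h2⟩; exact h1.ne' h2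
  have hLν : Ldiv ν ν = ((∑ x, ν x * Real.log (ν x) : ℝ) : EReal) := Ldiv_eq_coe hνnn hνgood
  have hqDgood : ¬ ∃ x, 0 < ν x ∧ qD x = 0 := by
    intro hbad
    have h1 := hqDmax ν hνmem
    rw [hLν, Ldiv_eq_bot hbad] at h1
    exact (EReal.coe_ne_bot _) (le_bot_iff.mp h1)
  set b := ∑ x, ν x * Real.log (qD x) with hb
  have hLqD : Ldiv qD ν = (b : EReal) := Ldiv_eq_coe hνnn hqDgood
  have htpD : typeProb n ν qD = Real.exp (n * b) :=
    typeProb_eq_exp n hνnn (hnonneg qD hqDRn) hqDgood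
  have hLSupRn : LSup (Rn X n) ν = (b : EReal) := by
    rw [← hLqD]
    unfold LSup
    apply le_antisymm
    · exact iSup₂_le (fun q hq => hqDmax q (hfin.mem_toFinset.mpr hq))
    · exact le_biSup (fun q => Ldiv q ν) hqDRn
  have htp_le : ∀ q ∈ Rn X n, typeProb n ν q ≤ Real.exp (n * b) := by
    intro q hq
    by_cases hbad : ∃ x, 0 < ν x ∧ q x = 0
    · rw [typeProb_eq_zero n hn hbad]; positivity
    · rw [typeProb_eq_exp n hνnn (hnonneg q hq) hbad]
      have h2 := hqDmax q (hfin.mem_toFinset.mpr hq)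
      rw [Ldiv_eq_coe hνnn hbad, hLqD, EReal.coe_le_coe_iff] at h2
      exact Real.exp_le_exp.mpr (mul_le_mul_of_nonneg_left h2 hn'.le)
  have hD_lb : Real.exp (n * b) ≤ D := by
    rw [← htpD]
    exact Finset.single_le_sum
      (fun q hq => typeProb_nonneg n ν (hnonneg q (hfin.mem_toFinset.mp hq))) hqDmem
  have hD_ub : D ≤ K * Real.exp (n * b) := by
    calc D ≤ hfin.toFinset.card • Real.exp (n * b) :=
      Finset.sum_le_card_nsmul _ _ _ (fun q hq => htp_le q (hfin.mem_toFinset.mp hq))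
    _ = (hfin.toFinset.card : ℝ) * Real.exp (n * b) := by rw [nsmul_eq_mul]
    _ ≤ K * Real.exp (n * b) := mul_le_mul_of_nonneg_right hcard (Real.exp_pos _).le
  have hD0 : 0 < D := lt_of_lt_of_le (Real.exp_pos _) hD_lb
  by_cases hbadQ : ∀ q ∈ Q ∩ Rn X n, ∃ x, 0 < ν x ∧ q x = 0
  · -- degenerate case
    have hN0 : N = 0 := Finset.sum_eq_zero
      (fun q hq => typeProb_eq_zero n hn (hbadQ q (hfinQ.mem_toFinset.mp hq)))
    have hpost0 : post n ν Q = 0 := by rw [hpost, hN0, zero_div]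
    have helog : elog (post n ν Q) = ⊥ := by rw [hpost0]; unfold elog; simp
    have hval : ((((1:ℝ)/n : ℝ)) : EReal) * elog (post n ν Q) = ⊥ := by
      rw [helog]; exact EReal.coe_mul_bot_of_pos (by positivity)
    have hLQ : LSup (Q ∩ Rn X n) ν = ⊥ := by
      unfold LSup
      exact le_bot_iff.mp (iSup₂_le (fun q hq => (Ldiv_eq_bot (hbadQ q hq)).le))
    refine ⟨?_, ?_, ?_⟩
    · rw [hval, hLQ, hLSupRn, EReal.bot_sub, EReal.bot_sub]
    · rw [hval]; exact bot_le
    · rw [hval]; exact iff_of_true rfl hbadQ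
  · -- nondegenerate case
    obtain ⟨q0, hq0S, hq0good⟩ :
        ∃ q ∈ Q ∩ Rn X n, ¬ ∃ x, 0 < ν x ∧ q x = 0 := by
      push_neg at hbadQ
      obtain ⟨q, hq, h⟩ := hbadQ
      exact ⟨q, hq, by push_neg; exact h⟩
    obtain ⟨qN, hqNmem, hqNmax⟩ := Finset.exists_max_image hfinQ.toFinset
      (fun q => Ldiv q ν) ⟨q0, hfinQ.mem_toFinset.mpr hq0S⟩
    have hqNS : qN ∈ Q ∩ Rn X n := hfinQ.mem_toFinset.mp hqNmem
    have hqNgood : ¬ ∃ x, 0 < ν x ∧ qN x = 0 := by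
      intro hbad
      have h1 := hqNmax q0 (hfinQ.mem_toFinset.mpr hq0S)
      rw [Ldiv_eq_bot hbad, Ldiv_eq_coe hνnn hq0good] at h1
      exact (EReal.coe_ne_bot _) (le_bot_iff.mp h1)
    set a := ∑ x, ν x * Real.log (qN x) with ha
    have hLqN : Ldiv qN ν = (a : EReal) := Ldiv_eq_coe hνnn hqNgood
    have hLSupQ : LSup (Q ∩ Rn X n) ν = (a : EReal) := by
      rw [← hLqN]
      unfold LSup
      apply le_antisymm
      · exact iSup₂_le (fun q hq => hqNmax q (hfinQ.mem_toFinset.mpr hq))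
      · exact le_biSup (fun q => Ldiv q ν) hqNS
    have hnonnegQ : ∀ q ∈ Q ∩ Rn X n, ∀ x, 0 ≤ q x := fun q hq => hq.2.1.1
    have htpN : typeProb n ν qN = Real.exp (n * a) :=
      typeProb_eq_exp n hνnn (hnonnegQ qN hqNS) hqNgood
    have hN_lb : Real.exp (n * a) ≤ N := by
      rw [← htpN]
      exact Finset.single_le_sum
        (fun q hq => typeProb_nonneg n ν (hnonnegQ q (hfinQ.mem_toFinset.mp hq))) hqNmem
    have hcardQ : ((hfinQ.toFinset.card : ℝ)) ≤ K := by
      have hsub : hfinQ.toFinset ⊆ hfin.toFinset := by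
        intro q hq; exact hfin.mem_toFinset.mpr (hfinQ.mem_toFinset.mp hq).2
      exact le_trans (by exact_mod_cast Finset.card_le_card hsub) hcard
    have hN_ub : N ≤ K * Real.exp (n * a) := by
      calc N ≤ hfinQ.toFinset.card • Real.exp (n * a) := by
            apply Finset.sum_le_card_nsmul
            intro q hq
            have hqS := hfinQ.mem_toFinset.mp hq
            by_cases hbad : ∃ x, 0 < ν x ∧ q x = 0
            · rw [typeProb_eq_zero n hn hbad]; positivity
            · rw [typeProb_eq_exp n hνnn (hnonnegQ q hqS) hbad]
              have h2 := hqNmax q hq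
              rw [Ldiv_eq_coe hνnn hbad, hLqN, EReal.coe_le_coe_iff] at h2
              exact Real.exp_le_exp.mpr (mul_le_mul_of_nonneg_left h2 hn'.le)
      _ = (hfinQ.toFinset.card : ℝ) * Real.exp (n * a) := by rw [nsmul_eq_mul]
      _ ≤ K * Real.exp (n * a) := mul_le_mul_of_nonneg_right hcardQ (Real.exp_pos _).le
    have hN0 : 0 < N := lt_of_lt_of_le (Real.exp_pos _) hN_lb
    have hpost0 : 0 < post n ν Q := by rw [hpost]; positivity
    have hlogpost : Real.log (post n ν Q) = Real.log N - Real.log D := by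
      rw [hpost, Real.log_div hN0.ne' hD0.ne']
    have hlogN_lb : (n:ℝ) * a ≤ Real.log N := by
      calc (n:ℝ) * a = Real.log (Real.exp (n * a)) := (Real.log_exp _).symm
      _ ≤ Real.log N := Real.log_le_log (Real.exp_pos _) hN_lb
    have hlogN_ub : Real.log N ≤ Real.log K + n * a := by
      calc Real.log N ≤ Real.log (K * Real.exp (n*a)) := Real.log_le_log hN0 hN_ub
      _ = Real.log K + n * a := by
          rw [Real.log_mul hK0.ne' (Real.exp_pos _).ne', Real.log_exp]
    have hlogD_lb : (n:ℝ) * b ≤ Real.log D := by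
      calc (n:ℝ) * b = Real.log (Real.exp (n * b)) := (Real.log_exp _).symm
      _ ≤ Real.log D := Real.log_le_log (Real.exp_pos _) hD_lb
    have hlogD_ub : Real.log D ≤ Real.log K + n * b := by
      calc Real.log D ≤ Real.log (K * Real.exp (n*b)) := Real.log_le_log hD0 hD_ub
      _ = Real.log K + n * b := by
          rw [Real.log_mul hK0.ne' (Real.exp_pos _).ne', Real.log_exp]
    have helogp : elog (post n ν Q) = ((Real.log (post n ν Q) : ℝ) : EReal) := by
      unfold elog; rw [if_neg (not_le.mpr hpost0)]
    have hval : (((1:ℝ)/n : ℝ) : EReal) * elog (post n ν Q)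
        = ((((1:ℝ)/n) * Real.log (post n ν Q) : ℝ) : EReal) := by
      rw [helogp, ← EReal.coe_mul]
    refine ⟨?_, ?_, ?_⟩
    · rw [hval, hLSupQ, hLSupRn, ← EReal.coe_sub, ← EReal.coe_sub, EReal.coe_le_coe_iff,
        hlogpost]
      have key : a - b - (m:ℝ)/n * Real.log ((n:ℝ)+1)
          = (1/(n:ℝ)) * ((n*a) - (Real.log K + n*b)) := by
        rw [hlogK]; field_simp; ring
      calc a - b - (m:ℝ)/n * Real.log ((n:ℝ)+1)
          = (1/(n:ℝ)) * ((n*a) - (Real.log K + n*b)) := key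
      _ ≤ (1/(n:ℝ)) * (Real.log N - Real.log D) :=
          mul_le_mul_of_nonneg_left (by linarith) (by positivity)
    · rw [hval, hLSupQ, hLSupRn, ← EReal.coe_sub, ← EReal.coe_add, EReal.coe_le_coe_iff,
        hlogpost]
      have key : a - b + (m:ℝ)/n * Real.log ((n:ℝ)+1)
          = (1/(n:ℝ)) * ((Real.log K + n*a) - n*b) := by
        rw [hlogK]; field_simp; ring
      calc (1/(n:ℝ)) * (Real.log N - Real.log D)
          ≤ (1/(n:ℝ)) * ((Real.log K + n*a) - n*b) :=
          mul_le_mul_of_nonneg_left (by linarith) (by positivity)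
      _ = a - b + (m:ℝ)/n * Real.log ((n:ℝ)+1) := key.symm
    · rw [hval]
      constructor
      · intro h; exact absurd h (EReal.coe_ne_bot _)
      · intro h; exact absurd (h qN hqNS) hqNgood
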